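/- Let ℓ and p be distinct prime numbers and let L/K be an extension of number fields of degree p. Let q be a nonzero prime ideal of O_K such that either qO_L is a prime ideal of O_L, or qO_L = P^p for some prime ideal P of O_L, and let P denote the unique prime ideal of O_L lying over q. If α ∈ Lˣ satisfies N_{L/K}(α) ∈ (Kˣ)^ℓ, then ℓ divides ord_P(α). -/

import Mathlib

open NumberField Ideal
open scoped nonZeroDivisors

section MultLemmas

variable {R : Type*} [CommRing R] [IsDedekindDomain R] {P : Ideal R}

private lemma span_ne_zero' {x : R} (hx : x ≠ 0) : Ideal.span {x} ≠ (0 : Ideal R) := by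
  simpa [Ideal.zero_eq_bot, Ideal.span_singleton_eq_bot] using hx

private lemma mult_mul' (hP : Prime P) {I J : Ideal R} (hI : I ≠ 0) (hJ : J ≠ 0) :
    multiplicity P (I * J) = multiplicity P I + multiplicity P J :=
  multiplicity_mul hP (FiniteMultiplicity.of_prime_left hP (mul_ne_zero hI hJ))

private lemma mult_pow' (hP : Prime P) {I : Ideal R} (hI : I ≠ 0) (n : ℕ) :
    multiplicity P (I ^ n) = n * multiplicity P I := by
  induction n with
  | zero =>
      simp only [pow_zero, Nat.zero_mul]
      exact multiplicity_eq_zero.mpr (fun h => hP.not_unit (isUnit_of_dvd_one h))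
  | succ n ih =>
      rw [pow_succ, mult_mul' hP (pow_ne_zero _ hI) hI, ih]
      ring

private lemma mult_pow_mul' (hP : Prime P) {J : Ideal R} (hJ : ¬J ≤ P) (k : ℕ) :
    multiplicity P (P ^ k * J) = k := by
  apply multiplicity_eq_of_dvd_of_not_dvd (dvd_mul_right _ _)
  intro hdvd
  have h1 : P ^ k * P ∣ P ^ k * J := by rwa [← pow_succ]
  have h2 : P ∣ J := (mul_dvd_mul_iff_left (pow_ne_zero k hP.ne_zero)).mp h1
  exact hJ (Ideal.le_of_dvd h2)

private lemma exists_decomp' (hP : Prime P) {I : Ideal R} (hI : I ≠ 0) :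
    ∃ J : Ideal R, I = P ^ multiplicity P I * J ∧ ¬J ≤ P ∧ J ≠ 0 := by
  obtain ⟨J, hJ, hnd⟩ :=
    (FiniteMultiplicity.of_prime_left hP hI).exists_eq_pow_mul_and_not_dvd
  refine ⟨J, hJ, fun hle => hnd ((Ideal.dvd_iff_le).mpr hle), fun h0 => hI ?_⟩
  rw [hJ, h0, mul_zero]

private lemma multW_mul' (hP : Prime P) {x y : R} (hx : x ≠ 0) (hy : y ≠ 0) :
    multiplicity P (Ideal.span {x * y}) =
      multiplicity P (Ideal.span {x}) + multiplicity P (Ideal.span {y}) := by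
  rw [← Ideal.span_singleton_mul_span_singleton]
  exact mult_mul' hP (span_ne_zero' hx) (span_ne_zero' hy)

private lemma multW_pow' (hP : Prime P) {x : R} (hx : x ≠ 0) (n : ℕ) :
    multiplicity P (Ideal.span {x ^ n}) = n * multiplicity P (Ideal.span {x}) := by
  rw [← Ideal.span_singleton_pow]
  exact mult_pow' hP (span_ne_zero' hx) n

end MultLemmas

section Main

variable {K L : Type*} [Field K] [Field L] [NumberField K] [NumberField L]
    [Algebra K L] [FiniteDimensional K L]

/-- If `P` is the unique prime of `𝓞 L` over `q` and the norm of `z` lies in `q`,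
then `z ∈ P`. -/
private lemma mem_of_norm_mem (q : Ideal (𝓞 K)) (P : Ideal (𝓞 L)) (hP : P.IsPrime)
    (hPle : q.map (algebraMap (𝓞 K) (𝓞 L)) ≤ P)
    (huniq : ∀ P' : Ideal (𝓞 L), P'.IsPrime →
      q.map (algebraMap (𝓞 K) (𝓞 L)) ≤ P' → P' = P)
    {z : 𝓞 L} (hz : RingOfIntegers.norm K z ∈ q) : z ∈ P := by
  classical
  haveI := hP
  let Ω := AlgebraicClosure L
  let S := integralClosure ℤ Ω
  -- each conjugate of an algebraic integer is an algebraic integer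
  have hint : ∀ (y : 𝓞 L) (σ : L →ₐ[K] Ω), σ (algebraMap (𝓞 L) L y) ∈ S := by
    intro y σ
    exact (RingOfIntegers.isIntegral_coe y).map σ
  -- ring homs `𝓞 L →+* S` induced by embeddings
  let ψ : (L →ₐ[K] Ω) → (𝓞 L →+* S) := fun σ =>
    RingHom.codRestrict ((σ : L →+* Ω).comp (algebraMap (𝓞 L) L)) S.toSubring
      (fun y => hint y σ)
  -- the canonical embedding
  let σ₀ : L →ₐ[K] Ω := IsScalarTower.toAlgHom K L Ω
  letI : Algebra (𝓞 L) S := (ψ σ₀).toAlgebra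
  haveI : IsScalarTower ℤ (𝓞 L) S :=
    IsScalarTower.of_algebraMap_eq' (Subsingleton.elim (algebraMap ℤ S) _)
  haveI : Algebra.IsIntegral (𝓞 L) S :=
    ⟨fun s => IsIntegral.tower_top (R := ℤ) (integralClosure.isIntegral s)⟩
  -- a prime of `S` above `P`
  obtain ⟨Q, -, hQp, hQP⟩ := Ideal.exists_ideal_over_prime_of_isIntegral P ⊥
    (by
      intro x hx
      have : algebraMap (𝓞 L) S x = 0 := hx
      have hx0 : x = 0 := by
        have hcoe : (algebraMap (𝓞 L) S x : Ω) = algebraMap L Ω (algebraMap (𝓞 L) L x) := rfl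
        have : algebraMap L Ω (algebraMap (𝓞 L) L x) = 0 := by
          rw [← hcoe, this]; rfl
        have h1 : algebraMap (𝓞 L) L x = 0 := by
          exact (map_eq_zero_iff _ (algebraMap L Ω).injective).mp this
        exact (map_eq_zero_iff _ (FaithfulSMul.algebraMap_injective (𝓞 L) L)).mp h1
      rw [hx0]; exact P.zero_mem)
  -- the image of the norm of `z` in `S` lies in `Q`
  have hNz_mem : algebraMap (𝓞 L) S (algebraMap (𝓞 K) (𝓞 L) (RingOfIntegers.norm K z)) ∈ Q := by
    have h1 : algebraMap (𝓞 K) (𝓞 L) (RingOfIntegers.norm K z) ∈ P :=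
      hPle (Ideal.mem_map_of_mem _ hz)
    rw [← hQP] at h1
    exact h1
  -- the norm is the product of the conjugates, inside `S`
  have hprod : algebraMap (𝓞 L) S (algebraMap (𝓞 K) (𝓞 L) (RingOfIntegers.norm K z)) =
      ∏ σ : L →ₐ[K] Ω, (⟨σ (algebraMap (𝓞 L) L z), hint z σ⟩ : S) := by
    apply Subtype.ext
    push_cast
    have hcoe : ((algebraMap (𝓞 L) S (algebraMap (𝓞 K) (𝓞 L) (RingOfIntegers.norm K z))) : Ω)
        = algebraMap L Ω ((algebraMap (𝓞 K) (𝓞 L) (RingOfIntegers.norm K z) : L)) := rfl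
    rw [hcoe, RingOfIntegers.coe_algebraMap_norm, ← IsScalarTower.algebraMap_apply,
      Algebra.norm_eq_prod_embeddings]
  rw [hprod] at hNz_mem
  -- some conjugate of `z` lies in `Q`
  haveI : Q.IsPrime := hQp
  obtain ⟨σ, -, hσ⟩ := (Ideal.IsPrime.prod_mem_iff).mp hNz_mem
  -- pull back along `ψ σ`
  let P' : Ideal (𝓞 L) := Q.comap (ψ σ)
  have hP'p : P'.IsPrime := Ideal.IsPrime.comap _
  have hzP' : z ∈ P' := by
    show ψ σ z ∈ Q
    exact hσ
  have hmapP' : q.map (algebraMap (𝓞 K) (𝓞 L)) ≤ P' := by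
    rw [Ideal.map_le_iff_le_comap]
    intro x hx
    show ψ σ (algebraMap (𝓞 K) (𝓞 L) x) ∈ Q
    have hψφ : ψ σ (algebraMap (𝓞 K) (𝓞 L) x) =
        algebraMap (𝓞 L) S (algebraMap (𝓞 K) (𝓞 L) x) := by
      apply Subtype.ext
      show σ ((algebraMap (𝓞 K) (𝓞 L) x : L)) = σ₀ ((algebraMap (𝓞 K) (𝓞 L) x : L))
      have hc : ((algebraMap (𝓞 K) (𝓞 L) x : L)) = algebraMap K L (x : K) := rfl
      rw [hc, σ.commutes, σ₀.commutes]
    rw [hψφ]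
    have h1 : algebraMap (𝓞 K) (𝓞 L) x ∈ P := hPle (Ideal.mem_map_of_mem _ hx)
    rw [← hQP] at h1
    exact h1
  rw [huniq P' hP'p hmapP'] at hzP'
  exact hzP'

/-- The key valuation identity: `e · ord_q (N y) = [L:K] · ord_P y`. -/
private lemma key_val (q : Ideal (𝓞 K)) (hq : q.IsPrime) (hq0 : q ≠ ⊥)
    (P : Ideal (𝓞 L)) (hP : P.IsPrime) (hP0 : P ≠ ⊥)
    (hPq : P.comap (algebraMap (𝓞 K) (𝓞 L)) = q)
    (e : ℕ) (he0 : e ≠ 0) (he : q.map (algebraMap (𝓞 K) (𝓞 L)) = P ^ e)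
    {y : 𝓞 L} (hy : y ≠ 0) :
    e * multiplicity q (Ideal.span {RingOfIntegers.norm K y}) =
      Module.finrank K L * multiplicity P (Ideal.span {y}) := by
  classical
  have hqprime : Prime q := Ideal.prime_of_isPrime hq0 hq
  have hPprime : Prime P := Ideal.prime_of_isPrime hP0 hP
  have hPmax : P.IsMaximal := hP.isMaximal hP0
  -- uniqueness of the prime over q
  have huniq : ∀ P' : Ideal (𝓞 L), P'.IsPrime →
      q.map (algebraMap (𝓞 K) (𝓞 L)) ≤ P' → P' = P := by
    intro P' hP' hle
    rw [he] at hle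
    have hPle : P ≤ P' := hP'.pow_le_iff he0 |>.mp hle
    exact (hPmax.eq_of_le hP'.ne_top hPle).symm
  have hPle : q.map (algebraMap (𝓞 K) (𝓞 L)) ≤ P := by
    rw [he]
    exact Ideal.pow_le_self he0
  -- norms of elements outside P are outside q
  have hnorm_not_mem : ∀ z : 𝓞 L, z ∉ P → RingOfIntegers.norm K z ∉ q := by
    intro z hz hmem
    exact hz (mem_of_norm_mem q P hP hPle huniq hmem)
  -- norm of a nonzero element is nonzero
  have hNne : ∀ z : 𝓞 L, z ≠ 0 → RingOfIntegers.norm K z ≠ 0 := by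
    intro z hz h0
    apply hz
    have : Algebra.norm K (algebraMap (𝓞 L) L z) = 0 := by
      rw [← RingOfIntegers.coe_norm, h0]
      simp
    have hz0 : algebraMap (𝓞 L) L z = 0 := by
      by_contra hne
      exact hne (Algebra.norm_eq_zero_iff.mp this)
    exact (map_eq_zero_iff _ (FaithfulSMul.algebraMap_injective (𝓞 L) L)).mp hz0
  -- a power of P is principal
  set h := Fintype.card (ClassGroup (𝓞 L)) with hh_def
  have hh0 : h ≠ 0 := Fintype.card_ne_zero
  have hPnz : P ∈ (Ideal (𝓞 L))⁰ :=
    mem_nonZeroDivisors_iff_ne_zero.mpr (by simpa [Ideal.zero_eq_bot] using hP0)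
  have hprin : (P ^ h).IsPrincipal := by
    have h1 : ClassGroup.mk0 ⟨P, hPnz⟩ ^ h = 1 := pow_card_eq_one
    have h2 : (⟨P, hPnz⟩ : (Ideal (𝓞 L))⁰) ^ h = ⟨P ^ h, pow_mem hPnz h⟩ := rfl
    rw [← map_pow, h2, ClassGroup.mk0_eq_one_iff] at h1
    exact h1
  obtain ⟨π, hπ⟩ := hprin
  have hπspan : P ^ h = Ideal.span {π} := by simpa using hπ
  have hπ0 : π ≠ 0 := by
    intro h0
    apply hP0
    have : P ^ h = ⊥ := by rw [hπspan, h0]; simp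
    exact pow_eq_zero_iff hh0 |>.mp (by simpa [Ideal.zero_eq_bot] using this)
  -- the starred identity
  have hstar : ∀ z : 𝓞 L, z ≠ 0 →
      h * multiplicity q (Ideal.span {RingOfIntegers.norm K z}) =
        multiplicity P (Ideal.span {z}) *
          multiplicity q (Ideal.span {RingOfIntegers.norm K π}) := by
    intro z hz
    set v := multiplicity P (Ideal.span {z}) with hv_def
    obtain ⟨J, hJeq, hJle, hJ0⟩ := exists_decomp' hPprime (span_ne_zero' hz)
    -- span (z^h) = span (π^v) * J^h
    have hzh : Ideal.span {z ^ h} = Ideal.span {π ^ v} * J ^ h := by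
      rw [← Ideal.span_singleton_pow, hJeq, mul_pow, ← pow_mul, mul_comm v h, pow_mul,
        hπspan, Ideal.span_singleton_pow]
    -- π^v divides z^h
    have hdvd : π ^ v ∣ z ^ h := by
      rw [← Ideal.span_singleton_le_span_singleton]
      rw [hzh]
      exact Ideal.mul_le_left
    obtain ⟨ρ, hρ⟩ := hdvd
    have hρ0 : ρ ≠ 0 := by
      intro h0
      apply pow_ne_zero h hz
      rw [hρ, h0, mul_zero]
    have hspanρ : J ^ h = Ideal.span {ρ} := by
      have h1 : Ideal.span {π ^ v} * J ^ h = Ideal.span {π ^ v} * Ideal.span {ρ} := by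
        rw [← hzh, Ideal.span_singleton_mul_span_singleton, ← hρ]
      exact mul_left_cancel₀ (span_ne_zero' (pow_ne_zero v hπ0)) h1
    have hρP : ρ ∉ P := by
      intro hmem
      apply hJle
      have h1 : P ∣ J ^ h := by
        rw [hspanρ]
        exact Ideal.dvd_iff_le.mpr ((Ideal.span_singleton_le_iff_mem _).mpr hmem)
      exact Ideal.le_of_dvd (hPprime.dvd_of_dvd_pow h1)
    -- apply the norm
    have hNeq : RingOfIntegers.norm K z ^ h =
        RingOfIntegers.norm K π ^ v * RingOfIntegers.norm K ρ := by
      rw [← _root_.map_pow, hρ, _root_.map_mul, _root_.map_pow]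
    have hWρ : multiplicity q (Ideal.span {RingOfIntegers.norm K ρ}) = 0 := by
      apply multiplicity_eq_zero.mpr
      intro hdvd'
      exact hnorm_not_mem ρ hρP
        ((Ideal.span_singleton_le_iff_mem _).mp (Ideal.le_of_dvd hdvd'))
    calc h * multiplicity q (Ideal.span {RingOfIntegers.norm K z})
        = multiplicity q (Ideal.span {RingOfIntegers.norm K z ^ h}) :=
          (multW_pow' hqprime (hNne z hz) h).symm
      _ = multiplicity q (Ideal.span {RingOfIntegers.norm K π ^ v *
            RingOfIntegers.norm K ρ}) := by rw [hNeq]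
      _ = multiplicity q (Ideal.span {RingOfIntegers.norm K π ^ v}) +
            multiplicity q (Ideal.span {RingOfIntegers.norm K ρ}) :=
          multW_mul' hqprime (pow_ne_zero v (hNne π hπ0)) (hNne ρ hρ0)
      _ = v * multiplicity q (Ideal.span {RingOfIntegers.norm K π}) := by
          rw [hWρ, multW_pow' hqprime (hNne π hπ0) v, add_zero]
  -- pick a nonzero element of q
  obtain ⟨t, htq, ht0⟩ := Submodule.exists_mem_ne_zero_of_ne_bot hq0
  set m := multiplicity q (Ideal.span {t}) with hm_def
  have hm0 : m ≠ 0 := by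
    rw [hm_def]
    apply multiplicity_ne_zero.mpr
    exact Ideal.dvd_iff_le.mpr ((Ideal.span_singleton_le_iff_mem _).mpr htq)
  -- the valuation of algebraMap t at P
  have htL0 : algebraMap (𝓞 K) (𝓞 L) t ≠ 0 := by
    intro h0
    exact ht0 ((map_eq_zero_iff _ (FaithfulSMul.algebraMap_injective (𝓞 K) (𝓞 L))).mp h0)
  have hvt : multiplicity P (Ideal.span {algebraMap (𝓞 K) (𝓞 L) t}) = e * m := by
    obtain ⟨C, hCeq, hCle, hC0⟩ := exists_decomp' hqprime (span_ne_zero' ht0)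
    rw [← hm_def] at hCeq
    have hmapC : ¬ Ideal.map (algebraMap (𝓞 K) (𝓞 L)) C ≤ P := by
      intro hle
      apply hCle
      calc C ≤ (Ideal.map (algebraMap (𝓞 K) (𝓞 L)) C).comap (algebraMap (𝓞 K) (𝓞 L)) :=
            Ideal.le_comap_map
        _ ≤ P.comap (algebraMap (𝓞 K) (𝓞 L)) := Ideal.comap_mono hle
        _ = q := hPq
    have hspan : Ideal.span {algebraMap (𝓞 K) (𝓞 L) t} =
        P ^ (e * m) * Ideal.map (algebraMap (𝓞 K) (𝓞 L)) C := by
      have h1 : Ideal.span {algebraMap (𝓞 K) (𝓞 L) t} =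
          Ideal.map (algebraMap (𝓞 K) (𝓞 L)) (Ideal.span {t}) := by
        rw [Ideal.map_span, Set.image_singleton]
      rw [h1, hCeq, Ideal.map_mul, Ideal.map_pow, he, ← pow_mul]
    rw [hspan]
    exact mult_pow_mul' hPprime hmapC (e * m)
  -- the norm of algebraMap t
  have hNt : RingOfIntegers.norm K (algebraMap (𝓞 K) (𝓞 L) t) = t ^ Module.finrank K L :=
    RingOfIntegers.norm_algebraMap K t
  -- apply the star identity to algebraMap t
  have hstep := hstar (algebraMap (𝓞 K) (𝓞 L) t) htL0
  rw [hNt, hvt, multW_pow' hqprime ht0 (Module.finrank K L)] at hstep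
  -- hstep : h * (finrank * m) = (e * m) * W(Nπ)
  have hcancel : h * Module.finrank K L =
      e * multiplicity q (Ideal.span {RingOfIntegers.norm K π}) := by
    have h1 : m * (h * Module.finrank K L) =
        m * (e * multiplicity q (Ideal.span {RingOfIntegers.norm K π})) := by
      ring_nf
      ring_nf at hstep
      linarith [hstep]
    exact Nat.eq_of_mul_eq_mul_left (Nat.pos_of_ne_zero hm0) h1
  -- conclude
  have hfinal := hstar y hy
  have h2 : h * (e * multiplicity q (Ideal.span {RingOfIntegers.norm K y})) =
      h * (Module.finrank K L * multiplicity P (Ideal.span {y})) := by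
    calc h * (e * multiplicity q (Ideal.span {RingOfIntegers.norm K y}))
        = e * (h * multiplicity q (Ideal.span {RingOfIntegers.norm K y})) := by ring
      _ = e * (multiplicity P (Ideal.span {y}) *
            multiplicity q (Ideal.span {RingOfIntegers.norm K π})) := by rw [hfinal]
      _ = multiplicity P (Ideal.span {y}) *
            (e * multiplicity q (Ideal.span {RingOfIntegers.norm K π})) := by ring
      _ = multiplicity P (Ideal.span {y}) * (h * Module.finrank K L) := by rw [hcancel]
      _ = h * (Module.finrank K L * multiplicity P (Ideal.span {y})) := by ring
  exact Nat.eq_of_mul_eq_mul_left (Nat.pos_of_ne_zero hh0) h2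

end Main

/-- Let `ℓ ≠ p` be primes and `L/K` an extension of number fields of degree
`p`.  Let `q` be a nonzero prime ideal of `𝓞 K` such that either `q 𝓞 L` is prime or
`q 𝓞 L = P ^ p` for a prime `P` of `𝓞 L`, and let `P` be the unique prime of `𝓞 L` over `q`.
If `α ∈ Lˣ` has norm an `ℓ`-th power in `Kˣ`, then `ℓ ∣ ord_P α`, where `ord_P α` is computed
as `ord_P a − ord_P b` for any representation `α = a / b` with nonzero `a, b ∈ 𝓞 L`. -/
theorem stmt_6 (ℓ p : ℕ) (hℓ : ℓ.Prime) (hp : p.Prime) (hℓp : ℓ ≠ p)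
    (K L : Type*) [Field K] [Field L] [NumberField K] [NumberField L]
    [Algebra K L] [FiniteDimensional K L] (hdeg : Module.finrank K L = p)
    (q : Ideal (𝓞 K)) (hq : q.IsPrime) (hq0 : q ≠ ⊥)
    (P : Ideal (𝓞 L)) (hP : P.IsPrime)
    (hPq : P.comap (algebraMap (𝓞 K) (𝓞 L)) = q)
    (hqL : q.map (algebraMap (𝓞 K) (𝓞 L)) = P ∨ q.map (algebraMap (𝓞 K) (𝓞 L)) = P ^ p)
    (α : L) (hα : α ≠ 0)
    (hnorm : ∃ x : K, x ^ ℓ = Algebra.norm K α)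
    (a b : 𝓞 L) (ha : a ≠ 0) (hb : b ≠ 0)
    (hab : α = algebraMap (𝓞 L) L a / algebraMap (𝓞 L) L b) :
    (ℓ : ℤ) ∣ (multiplicity P (Ideal.span {a}) : ℤ) - (multiplicity P (Ideal.span {b}) : ℤ) := by
  classical
  have hqprime : Prime q := Ideal.prime_of_isPrime hq0 hq
  -- P is nonzero
  have hP0 : P ≠ ⊥ := by
    intro h0
    apply hq0
    rw [← hPq, h0]
    rw [← RingHom.ker_eq_comap_bot, NumberField.RingOfIntegers.ker_algebraMap_eq_bot]
  -- extract e
  obtain ⟨e, he0, he⟩ : ∃ e : ℕ, e ≠ 0 ∧ q.map (algebraMap (𝓞 K) (𝓞 L)) = P ^ e := by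
    rcases hqL with h1 | h2
    · exact ⟨1, one_ne_zero, by rw [h1, pow_one]⟩
    · exact ⟨p, hp.ne_zero, h2⟩
  -- notation
  set N := RingOfIntegers.norm (L := L) K with hN_def
  have hNne : ∀ z : 𝓞 L, z ≠ 0 → N z ≠ 0 := by
    intro z hz h0
    apply hz
    have h1 : Algebra.norm K (algebraMap (𝓞 L) L z) = 0 := by
      rw [← RingOfIntegers.coe_norm, ← hN_def, h0]
      simp
    have hz0 : algebraMap (𝓞 L) L z = 0 := by
      by_contra hne
      exact hne (Algebra.norm_eq_zero_iff.mp h1)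
    exact (map_eq_zero_iff _ (FaithfulSMul.algebraMap_injective (𝓞 L) L)).mp hz0
  -- the multiplicative bridge: ℓ ∣ W (N a) - W (N b)
  have haL : algebraMap (𝓞 L) L a ≠ 0 :=
    fun h0 => ha ((map_eq_zero_iff _ (FaithfulSMul.algebraMap_injective (𝓞 L) L)).mp h0)
  have hbL : algebraMap (𝓞 L) L b ≠ 0 :=
    fun h0 => hb ((map_eq_zero_iff _ (FaithfulSMul.algebraMap_injective (𝓞 L) L)).mp h0)
  obtain ⟨x, hx⟩ := hnorm
  have hx0 : x ≠ 0 := by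
    intro h0
    apply hα
    rw [h0, zero_pow hℓ.ne_zero] at hx
    exact Algebra.norm_eq_zero_iff.mp hx.symm
  obtain ⟨c, d, hd, hxcd⟩ := IsFractionRing.div_surjective (A := 𝓞 K) x
  have hd0 : d ≠ 0 := nonZeroDivisors.ne_zero hd
  have hdK0 : algebraMap (𝓞 K) K d ≠ 0 :=
    fun h0 => hd0 ((map_eq_zero_iff _ (FaithfulSMul.algebraMap_injective (𝓞 K) K)).mp h0)
  have hc0 : c ≠ 0 := by
    rintro rfl
    apply hx0
    rw [← hxcd]
    simp
  -- the basic norm equation in K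
  have hmulL : α * algebraMap (𝓞 L) L b = algebraMap (𝓞 L) L a := by
    rw [hab, div_mul_cancel₀ _ hbL]
  have hnormmul : Algebra.norm K α * Algebra.norm K (algebraMap (𝓞 L) L b) =
      Algebra.norm K (algebraMap (𝓞 L) L a) := by
    rw [← _root_.map_mul, hmulL]
  have hcoeNa : (algebraMap (𝓞 K) K (N a)) = Algebra.norm K (algebraMap (𝓞 L) L a) := rfl
  have hcoeNb : (algebraMap (𝓞 K) K (N b)) = Algebra.norm K (algebraMap (𝓞 L) L b) := rfl
  have hKeq : algebraMap (𝓞 K) K (c ^ ℓ * N b) = algebraMap (𝓞 K) K (d ^ ℓ * N a) := by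
    rw [_root_.map_mul, _root_.map_mul, _root_.map_pow, _root_.map_pow, hcoeNa, hcoeNb,
      ← hnormmul, ← hx, ← hxcd]
    rw [div_pow]
    field_simp
  have hOKeq : c ^ ℓ * N b = d ^ ℓ * N a :=
    (FaithfulSMul.algebraMap_injective (𝓞 K) K) hKeq
  -- apply multiplicity at q
  have hWeq : ℓ * multiplicity q (Ideal.span {c}) + multiplicity q (Ideal.span {N b}) =
      ℓ * multiplicity q (Ideal.span {d}) + multiplicity q (Ideal.span {N a}) := by
    have h1 := congrArg (fun I => multiplicity q I) (congrArg (fun z => Ideal.span {z}) hOKeq)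
    rw [multW_mul' hqprime (pow_ne_zero ℓ hc0) (hNne b hb),
      multW_mul' hqprime (pow_ne_zero ℓ hd0) (hNne a ha),
      multW_pow' hqprime hc0 ℓ, multW_pow' hqprime hd0 ℓ] at h1
    exact h1
  -- key valuation identities
  have hka := key_val q hq hq0 P hP hP0 hPq e he0 he ha
  have hkb := key_val q hq hq0 P hP hP0 hPq e he0 he hb
  rw [hdeg] at hka hkb
  -- now pure integer arithmetic
  have hdvd1 : (ℓ : ℤ) ∣ (multiplicity q (Ideal.span {N a}) : ℤ) -
      (multiplicity q (Ideal.span {N b}) : ℤ) := by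
    refine ⟨(multiplicity q (Ideal.span {c}) : ℤ) - (multiplicity q (Ideal.span {d}) : ℤ), ?_⟩
    have := congrArg (fun n : ℕ => (n : ℤ)) hWeq
    push_cast at this
    linarith
  have hdvd2 : (ℓ : ℤ) ∣ (p : ℤ) * ((multiplicity P (Ideal.span {a}) : ℤ) -
      (multiplicity P (Ideal.span {b}) : ℤ)) := by
    have hea := congrArg (fun n : ℕ => (n : ℤ)) hka
    have heb := congrArg (fun n : ℕ => (n : ℤ)) hkb
    push_cast at hea heb
    obtain ⟨k, hk⟩ := hdvd1
    refine ⟨(e : ℤ) * k, ?_⟩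
    have : (p : ℤ) * ((multiplicity P (Ideal.span {a}) : ℤ) -
        (multiplicity P (Ideal.span {b}) : ℤ)) =
        (e : ℤ) * ((multiplicity q (Ideal.span {N a}) : ℤ) -
          (multiplicity q (Ideal.span {N b}) : ℤ)) := by linarith
    rw [this, hk]
    ring
  have hℓZ : Prime (ℓ : ℤ) := Nat.prime_iff_prime_int.mp hℓ
  rcases hℓZ.dvd_mul.mp hdvd2 with h1 | h2
  · exfalso
    have : ℓ ∣ p := Int.ofNat_dvd.mp (by exact_mod_cast h1)
    exact hℓp ((Nat.prime_dvd_prime_iff_eq hℓ hp).mp this)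
  · exact h2
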